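/- arXiv:1201.3350 — 2 statements merged into one kernel-verified Lean document; each statement's English description precedes it below -/
import Mathlib

section
/- The set of P-positions of Rational Nim equals {(x + n·(p₁+p₂), y + n·(q₁+q₂)) : (x,y) ∈ T_Q, n ∈ ℕ}. -/
/-- Membership in the set of allowed positions `B_Q`. -/
def inBQ (p1 q1 p2 q2 : ℕ) (pos : ℕ × ℕ) : Prop :=
  pos.1 * q1 ≤ pos.2 * p1 ∧ pos.2 * p2 ≤ pos.1 * q2

/-- Membership in the set `T_Q` (the inequalities are read in ℤ). -/
def inTQ (p1 q1 p2 q2 : ℕ) (pos : ℕ × ℕ) : Prop :=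
  inBQ p1 q1 p2 q2 pos ∧
    (p1 : ℤ) * ((pos.2 : ℤ) - (q2 : ℤ)) < (q1 : ℤ) * ((pos.1 : ℤ) - (p2 : ℤ)) ∧
    (p2 : ℤ) * ((pos.2 : ℤ) - (q1 : ℤ)) > (q2 : ℤ) * ((pos.1 : ℤ) - (p1 : ℤ))

/-- A legal move of the Q-subtraction game `G_Q(M)`. -/
def QMove (p1 q1 p2 q2 : ℕ) (M : Set (ℕ × ℕ)) (pos pos' : ℕ × ℕ) : Prop :=
  ∃ s t : ℕ, (s, t) ∈ M ∧
    p1 * s + p2 * t ≤ pos.1 ∧ q1 * s + q2 * t ≤ pos.2 ∧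
    pos'.1 = pos.1 - (p1 * s + p2 * t) ∧ pos'.2 = pos.2 - (q1 * s + q2 * t) ∧
    inBQ p1 q1 p2 q2 pos'

/-- `pos` is a P-position of the game with move relation `move`: every legal move
leads to a non-P-position.  (Every legal move of the games considered here strictly
decreases the coordinate sum, which makes the recursion well-founded.) -/
def PPos (move : ℕ × ℕ → ℕ × ℕ → Prop) : ℕ × ℕ → Prop
  | pos => ∀ pos', move pos pos' → pos'.1 + pos'.2 < pos.1 + pos.2 → ¬ PPos move pos'
termination_by pos => pos.1 + pos.2

/-- The move set of Rational Nim. -/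
def MRN : Set (ℕ × ℕ) := {m | ∃ t : ℕ, 1 ≤ t ∧ (m = (0, t) ∨ m = (t, 0))}

lemma PPos_unfold (move : ℕ × ℕ → ℕ × ℕ → Prop) (pos : ℕ × ℕ) :
    PPos move pos ↔
      ∀ pos', move pos pos' → pos'.1 + pos'.2 < pos.1 + pos.2 → ¬ PPos move pos' := by
  rw [PPos]

lemma cone (p1 q1 p2 q2 a b : ℤ) (hq1 : 0 ≤ q1) (hp2 : 0 ≤ p2) (hq2 : 0 < q2)
    (hD : q1 * p2 < p1 * q2) (h1 : a * q1 ≤ b * p1) (h2 : b * p2 ≤ a * q2) :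
    0 ≤ a ∧ 0 ≤ b := by
  have hb : 0 ≤ b := by nlinarith [mul_le_mul_of_nonneg_right h1 hq2.le,
    mul_le_mul_of_nonneg_right h2 hq1]
  constructor
  · nlinarith
  · exact hb

lemma subA (p1 q1 p2 q2 X Y s : ℕ) (hq2 : 0 < q2)
    (hD : q1 * p2 < p1 * q2)
    (h1 : X * q1 ≤ Y * p1) (h2 : Y * p2 ≤ X * q2)
    (hs : s * (p1 * q2 - q1 * p2) ≤ X * q2 - Y * p2) :
    p1 * s ≤ X ∧ q1 * s ≤ Y ∧
    (X - p1 * s) * q1 ≤ (Y - q1 * s) * p1 ∧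
    (Y - q1 * s) * p2 ≤ (X - p1 * s) * q2 ∧
    (X - p1 * s) * q2 - (Y - q1 * s) * p2 = (X * q2 - Y * p2) - s * (p1 * q2 - q1 * p2) ∧
    (Y - q1 * s) * p1 - (X - p1 * s) * q1 = Y * p1 - X * q1 := by
  have hD' : q1 * p2 ≤ p1 * q2 := hD.le
  have hsZ := hs
  zify [hD', h2] at hsZ
  set a : ℤ := (X : ℤ) - p1 * s with ha
  set b : ℤ := (Y : ℤ) - q1 * s with hb
  have ha1 : a * q1 ≤ b * p1 := by
    have : (X : ℤ) * q1 ≤ Y * p1 := by exact_mod_cast h1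
    nlinarith [this]
  have ha2 : b * p2 ≤ a * q2 := by nlinarith [hsZ]
  obtain ⟨hA, hB⟩ := cone (p1 : ℤ) q1 p2 q2 a b (by positivity) (by positivity)
    (by exact_mod_cast hq2) (by exact_mod_cast hD) ha1 ha2
  have hx : p1 * s ≤ X := by
    have : (p1 : ℤ) * s ≤ X := by linarith [hA]
    exact_mod_cast this
  have hy : q1 * s ≤ Y := by
    have : (q1 : ℤ) * s ≤ Y := by linarith [hB]
    exact_mod_cast this
  have c1 : (X - p1 * s) * q1 ≤ (Y - q1 * s) * p1 := by
    zify [hx, hy]; nlinarith [ha1]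
  have c2 : (Y - q1 * s) * p2 ≤ (X - p1 * s) * q2 := by
    zify [hx, hy]; nlinarith [ha2]
  refine ⟨hx, hy, c1, c2, ?_, ?_⟩
  · zify [hx, hy, c2, h2, hD', hs]
    ring
  · zify [hx, hy, c1, h1]
    ring

lemma subA' (p1 q1 p2 q2 X Y s : ℕ)
    (hx : p1 * s ≤ X) (hy : q1 * s ≤ Y)
    (hB2 : (Y - q1 * s) * p2 ≤ (X - p1 * s) * q2) :
    s * (p1 * q2 - q1 * p2) ≤ X * q2 - Y * p2 := by
  zify [hx, hy] at hB2
  rcases le_or_gt (q1 * p2) (p1 * q2) with hD' | hD'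
  · rcases le_or_gt (Y * p2) (X * q2) with h2 | h2
    · zify [hD', h2]; nlinarith [hB2]
    · have hz : X * q2 - Y * p2 = 0 := by omega
      rw [hz]
      have : s * (p1 * q2 - q1 * p2) = 0 := by
        rcases Nat.eq_zero_or_pos s with hs | hs
        · simp [hs]
        · have h2' : (X:ℤ) * q2 - Y * p2 < 0 := by
            have : (Y:ℤ) * p2 > X * q2 := by exact_mod_cast h2
            linarith
          have : (p1 * q2 : ℤ) - q1 * p2 ≤ 0 := by nlinarith [hB2, h2']
          have : p1 * q2 - q1 * p2 = 0 := by omega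
          simp [this]
      omega
  · have : p1 * q2 - q1 * p2 = 0 := by omega
    simp [this]

lemma move_iff (p1 q1 p2 q2 : ℕ) (pos pos' : ℕ × ℕ) :
    QMove p1 q1 p2 q2 MRN pos pos' ↔
      ((∃ s, 1 ≤ s ∧ p1 * s ≤ pos.1 ∧ q1 * s ≤ pos.2 ∧
          pos' = (pos.1 - p1 * s, pos.2 - q1 * s) ∧ inBQ p1 q1 p2 q2 pos') ∨
       (∃ t, 1 ≤ t ∧ p2 * t ≤ pos.1 ∧ q2 * t ≤ pos.2 ∧
          pos' = (pos.1 - p2 * t, pos.2 - q2 * t) ∧ inBQ p1 q1 p2 q2 pos')) := by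
  constructor
  · rintro ⟨s, t, ⟨u, hu, h | h⟩, hx, hy, he1, he2, hB⟩ <;>
      simp only [Prod.mk.injEq] at h <;> obtain ⟨rfl, rfl⟩ := h
    · right
      refine ⟨t, hu, by simpa using hx, by simpa using hy, ?_, hB⟩
      simp only [mul_zero, zero_add] at he1 he2
      exact Prod.ext he1 he2
    · left
      refine ⟨s, hu, by simpa using hx, by simpa using hy, ?_, hB⟩
      simp only [mul_zero, add_zero] at he1 he2
      exact Prod.ext he1 he2
  · rintro (⟨s, hs, hx, hy, rfl, hB⟩ | ⟨t, ht, hx, hy, rfl, hB⟩)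
    · exact ⟨s, 0, ⟨s, hs, Or.inr rfl⟩, by simpa using hx, by simpa using hy,
        by simp, by simp, hB⟩
    · exact ⟨0, t, ⟨t, ht, Or.inl rfl⟩, by simpa using hx, by simpa using hy,
        by simp, by simp, hB⟩

lemma div_unique' (D m n g : ℕ) (hm : m * D ≤ g) (hm' : g < m * D + D)
    (hn : n * D ≤ g) (hn' : g < n * D + D) : m = n := by
  rcases lt_trichotomy m n with h | h | h
  · exfalso
    have h2 : (m + 1) * D ≤ n * D := Nat.mul_le_mul_right _ h
    rw [add_mul, one_mul] at h2; omega
  · exact h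
  · exfalso
    have h2 : (n + 1) * D ≤ m * D := Nat.mul_le_mul_right _ h
    rw [add_mul, one_mul] at h2; omega

lemma key (p1 q1 p2 q2 : ℕ) (hp1 : 0 < p1) (hq2 : 0 < q2) (hD : q1 * p2 < p1 * q2) :
    ∀ N : ℕ, ∀ X Y : ℕ, X + Y < N → X * q1 ≤ Y * p1 → Y * p2 ≤ X * q2 →
      (PPos (QMove p1 q1 p2 q2 MRN) (X, Y) ↔
        ∃ n : ℕ, n * (p1 * q2 - q1 * p2) ≤ X * q2 - Y * p2 ∧
          X * q2 - Y * p2 < n * (p1 * q2 - q1 * p2) + (p1 * q2 - q1 * p2) ∧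
          n * (p1 * q2 - q1 * p2) ≤ Y * p1 - X * q1 ∧
          Y * p1 - X * q1 < n * (p1 * q2 - q1 * p2) + (p1 * q2 - q1 * p2)) := by
  have hDc : q2 * p1 - p2 * q1 = p1 * q2 - q1 * p2 := by
    rw [mul_comm q2 p1, mul_comm p2 q1]
  have hDc' : p2 * q1 < q2 * p1 := by rw [mul_comm q2 p1, mul_comm p2 q1]; exact hD
  intro N
  induction N with
  | zero => intro X Y h; exact absurd h (Nat.not_lt_zero _)
  | succ N ih =>
    intro X Y hlt hB1 hB2
    have hDpos : 0 < p1 * q2 - q1 * p2 := by omega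
    rw [PPos_unfold]
    constructor
    · -- PPos → P0
      intro hP
      by_contra hn0
      obtain ⟨nf, rf, hrf, hf⟩ : ∃ n r, r < p1 * q2 - q1 * p2 ∧
          X * q2 - Y * p2 = n * (p1 * q2 - q1 * p2) + r :=
        ⟨_ / _, _ % _, Nat.mod_lt _ hDpos, (Nat.div_add_mod' _ _).symm⟩
      obtain ⟨ng, rg, hrg, hg⟩ : ∃ n r, r < p1 * q2 - q1 * p2 ∧
          Y * p1 - X * q1 = n * (p1 * q2 - q1 * p2) + r :=
        ⟨_ / _, _ % _, Nat.mod_lt _ hDpos, (Nat.div_add_mod' _ _).symm⟩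
      have hne : nf ≠ ng := by
        rintro rfl
        exact hn0 ⟨nf, by omega, by omega, by omega, by omega⟩
      rcases Nat.lt_or_ge nf ng with hcase | hge
      · -- g bigger: B-move with t = ng - nf
        set t := ng - nf with hts
        have ht1 : 1 ≤ t := by omega
        have hmono : nf * (p1 * q2 - q1 * p2) ≤ ng * (p1 * q2 - q1 * p2) :=
          Nat.mul_le_mul_right _ hcase.le
        have htDe : t * (p1 * q2 - q1 * p2) = ng * (p1 * q2 - q1 * p2)
            - nf * (p1 * q2 - q1 * p2) := Nat.sub_mul ng nf _
        have htD : t * (q2 * p1 - p2 * q1) ≤ Y * p1 - X * q1 := by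
          rw [hDc]; omega
        obtain ⟨hx, hy, c1, c2, e1, e2⟩ :=
          subA q2 p2 q1 p1 Y X t hp1 hDc' hB2 hB1 htD
        rw [hDc] at htD e1
        have hB' : inBQ p1 q1 p2 q2 (X - p2 * t, Y - q2 * t) := ⟨c2, c1⟩
        have hmove : QMove p1 q1 p2 q2 MRN (X, Y) (X - p2 * t, Y - q2 * t) :=
          (move_iff p1 q1 p2 q2 (X, Y) _).2 (Or.inr ⟨t, ht1, hy, hx, rfl, hB'⟩)
        have h1 : 0 < q2 * t := Nat.mul_pos hq2 ht1
        have hsum : (X - p2 * t) + (Y - q2 * t) < X + Y :=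
          Nat.add_lt_add_of_le_of_lt (Nat.sub_le _ _)
            (Nat.sub_lt (lt_of_lt_of_le h1 hx) h1)
        refine hP (X - p2 * t, Y - q2 * t) hmove hsum ?_
        rw [ih (X - p2 * t) (Y - q2 * t) (by omega) c2 c1]
        exact ⟨nf, by omega, by omega, by omega, by omega⟩
      · -- f bigger: A-move with s = nf - ng
        have hcase : ng < nf := lt_of_le_of_ne hge (Ne.symm hne)
        set s := nf - ng with hss
        have hs1 : 1 ≤ s := by omega
        have hmono : ng * (p1 * q2 - q1 * p2) ≤ nf * (p1 * q2 - q1 * p2) :=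
          Nat.mul_le_mul_right _ hcase.le
        have hsDe : s * (p1 * q2 - q1 * p2) = nf * (p1 * q2 - q1 * p2)
            - ng * (p1 * q2 - q1 * p2) := Nat.sub_mul nf ng _
        have hsD : s * (p1 * q2 - q1 * p2) ≤ X * q2 - Y * p2 := by omega
        obtain ⟨hx, hy, c1, c2, e1, e2⟩ :=
          subA p1 q1 p2 q2 X Y s hq2 hD hB1 hB2 hsD
        have hB' : inBQ p1 q1 p2 q2 (X - p1 * s, Y - q1 * s) := ⟨c1, c2⟩
        have hmove : QMove p1 q1 p2 q2 MRN (X, Y) (X - p1 * s, Y - q1 * s) :=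
          (move_iff p1 q1 p2 q2 (X, Y) _).2 (Or.inl ⟨s, hs1, hx, hy, rfl, hB'⟩)
        have h1 : 0 < p1 * s := Nat.mul_pos hp1 hs1
        have hsum : (X - p1 * s) + (Y - q1 * s) < X + Y :=
          Nat.add_lt_add_of_lt_of_le (Nat.sub_lt (lt_of_lt_of_le h1 hx) h1)
            (Nat.sub_le _ _)
        refine hP (X - p1 * s, Y - q1 * s) hmove hsum ?_
        rw [ih (X - p1 * s) (Y - q1 * s) (by omega) c1 c2]
        exact ⟨ng, by omega, by omega, by omega, by omega⟩
    · -- P0 → PPos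
      rintro ⟨n, hn1, hn2, hn3, hn4⟩
      intro pos' hmove hsum hPP'
      rw [move_iff] at hmove
      rcases hmove with ⟨s, hs1, hx, hy, he, hB'⟩ | ⟨t, ht1, hx, hy, he, hB'⟩
      · -- A-move
        simp only at hx hy
        subst he
        obtain ⟨c1, c2⟩ := hB'
        simp only at c1 c2 hsum
        have hsD : s * (p1 * q2 - q1 * p2) ≤ X * q2 - Y * p2 :=
          subA' p1 q1 p2 q2 X Y s hx hy c2
        obtain ⟨_, _, _, _, e1, e2⟩ := subA p1 q1 p2 q2 X Y s hq2 hD hB1 hB2 hsD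
        obtain ⟨m, hm1, hm2, hm3, hm4⟩ := (ih _ _ (by omega) c1 c2).mp hPP'
        rw [e1] at hm1 hm2
        rw [e2] at hm3 hm4
        have hmn : m = n := div_unique' _ _ _ _ hm3 hm4 hn3 hn4
        subst hmn
        have hsD' : p1 * q2 - q1 * p2 ≤ s * (p1 * q2 - q1 * p2) :=
          Nat.le_mul_of_pos_left _ hs1
        omega
      · -- B-move
        simp only at hx hy
        subst he
        obtain ⟨c1, c2⟩ := hB'
        simp only at c1 c2 hsum
        have htD : t * (q2 * p1 - p2 * q1) ≤ Y * p1 - X * q1 :=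
          subA' q2 p2 q1 p1 Y X t hy hx c1
        obtain ⟨_, _, _, _, e1, e2⟩ := subA q2 p2 q1 p1 Y X t hp1 hDc' hB2 hB1
          (by rw [hDc] at htD ⊢; exact htD)
        rw [hDc] at htD e1
        obtain ⟨m, hm1, hm2, hm3, hm4⟩ := (ih _ _ (by omega) c1 c2).mp hPP'
        rw [e1] at hm3 hm4
        rw [e2] at hm1 hm2
        have hmn : m = n := div_unique' _ _ _ _ hm1 hm2 hn1 hn2
        subst hmn
        have htD' : p1 * q2 - q1 * p2 ≤ t * (p1 * q2 - q1 * p2) :=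
          Nat.le_mul_of_pos_left _ ht1
        omega

theorem stmt_10 (p1 q1 p2 q2 : ℕ) (hp1 : 0 < p1) (hq2 : 0 < q2)
    (hD : q1 * p2 < p1 * q2) :
    {pos : ℕ × ℕ | inBQ p1 q1 p2 q2 pos ∧ PPos (QMove p1 q1 p2 q2 MRN) pos} =
      {pos : ℕ × ℕ | ∃ x y n : ℕ, inTQ p1 q1 p2 q2 (x, y) ∧
        pos = (x + n * (p1 + p2), y + n * (q1 + q2))} := by
  have hDle : q1 * p2 ≤ p1 * q2 := hD.le
  ext pos
  obtain ⟨X, Y⟩ := pos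
  simp only [Set.mem_setOf_eq]
  constructor
  · rintro ⟨⟨hB1, hB2⟩, hP⟩
    simp only at hB1 hB2
    obtain ⟨n, h1, h2, h3, h4⟩ :=
      (key p1 q1 p2 q2 hp1 hq2 hD (X + Y + 1) X Y (by omega) hB1 hB2).mp hP
    zify [hDle, hB1] at h3 h4
    zify [hDle, hB2] at h1 h2
    have ha1 : ((X:ℤ) - n * (p1 + p2)) * q1 ≤ ((Y:ℤ) - n * (q1 + q2)) * p1 := by
      nlinarith [h3]
    have ha2 : ((Y:ℤ) - n * (q1 + q2)) * p2 ≤ ((X:ℤ) - n * (p1 + p2)) * q2 := by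
      nlinarith [h1]
    obtain ⟨hA, hB⟩ := cone (p1:ℤ) q1 p2 q2 _ _ (by positivity) (by positivity)
      (by exact_mod_cast hq2) (by exact_mod_cast hD) ha1 ha2
    have hxle : n * (p1 + p2) ≤ X := by
      have : ((n * (p1 + p2) : ℕ) : ℤ) ≤ X := by push_cast; linarith [hA]
      exact_mod_cast this
    have hyle : n * (q1 + q2) ≤ Y := by
      have : ((n * (q1 + q2) : ℕ) : ℤ) ≤ Y := by push_cast; linarith [hB]
      exact_mod_cast this
    refine ⟨X - n * (p1 + p2), Y - n * (q1 + q2), n, ⟨⟨?_, ?_⟩, ?_, ?_⟩, ?_⟩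
    · show (X - n * (p1 + p2)) * q1 ≤ (Y - n * (q1 + q2)) * p1
      zify [hxle, hyle]
      linarith [ha1]
    · show (Y - n * (q1 + q2)) * p2 ≤ (X - n * (p1 + p2)) * q2
      zify [hxle, hyle]
      linarith [ha2]
    · show (p1 : ℤ) * (((Y - n * (q1 + q2) : ℕ) : ℤ) - q2)
        < (q1 : ℤ) * (((X - n * (p1 + p2) : ℕ) : ℤ) - p2)
      push_cast [hxle, hyle]
      nlinarith [h4]
    · show (q2 : ℤ) * (((X - n * (p1 + p2) : ℕ) : ℤ) - p1)
        < (p2 : ℤ) * (((Y - n * (q1 + q2) : ℕ) : ℤ) - q1)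
      push_cast [hxle, hyle]
      nlinarith [h2]
    · have e1 : X - n * (p1 + p2) + n * (p1 + p2) = X := by omega
      have e2 : Y - n * (q1 + q2) + n * (q1 + q2) = Y := by omega
      exact Prod.ext e1.symm e2.symm
  · rintro ⟨x, y, n, ⟨⟨hb1, hb2⟩, t1, t2⟩, he⟩
    simp only [Prod.mk.injEq] at he
    obtain ⟨rfl, rfl⟩ := he
    simp only at hb1 hb2 t1 t2
    have hBX : (x + n * (p1 + p2)) * q1 ≤ (y + n * (q1 + q2)) * p1 := by
      linarith [hb1, Nat.mul_le_mul_left n hDle]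
    have hBY : (y + n * (q1 + q2)) * p2 ≤ (x + n * (p1 + p2)) * q2 := by
      linarith [hb2, Nat.mul_le_mul_left n hDle]
    refine ⟨⟨hBX, hBY⟩, ?_⟩
    refine (key p1 q1 p2 q2 hp1 hq2 hD (x + n * (p1 + p2) + (y + n * (q1 + q2)) + 1)
      _ _ (by omega) hBX hBY).mpr ⟨n, ?_, ?_, ?_, ?_⟩
    · zify [hDle, hBY]
      linarith [(by exact_mod_cast hb2 : (y:ℤ) * p2 ≤ (x:ℤ) * q2)]
    · zify [hDle, hBY]
      linarith [t2]
    · zify [hDle, hBX]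
      linarith [(by exact_mod_cast hb1 : (x:ℤ) * q1 ≤ (y:ℤ) * p1)]
    · zify [hDle, hBX]
      linarith [t1]
end

section
/- Along the lower P-positions of Rational Wythoff Nim the heap-size ratio converges to (q₁ + φ(q₁+q₂))/(p₁ + φ(p₁+p₂)): for every ε > 0 there exists N such that every P-position (A,B) of Rational Wythoff Nim with A ≥ N and B/A < (q₁+q₂)/(p₁+p₂) satisfies |B/A − (q₁ + φ(q₁+q₂))/(p₁ + φ(p₁+p₂))| < ε, where φ := (1+√5)/2. -/
/-- The move set of Rational Wythoff Nim. -/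
def MRW : Set (ℕ × ℕ) := {m | ∃ t : ℕ, 1 ≤ t ∧ (m = (0, t) ∨ m = (t, 0) ∨ m = (t, t))}

/-- The golden ratio `φ = (1+√5)/2`. -/
noncomputable def phi : ℝ := (1 + Real.sqrt 5) / 2



lemma phi_eq : phi = Real.goldenRatio := rfl
lemma one_lt_phi : 1 < phi := phi_eq ▸ Real.one_lt_goldenRatio
lemma phi_pos : 0 < phi := lt_trans one_pos one_lt_phi
lemma phi_lt_two : phi < 2 := phi_eq ▸ Real.goldenRatio_lt_two
lemma phi_sq : phi^2 = phi + 1 := phi_eq ▸ Real.goldenRatio_sq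

lemma phi_conj : Real.HolderConjugate phi (phi^2) := by
  rw [Real.holderConjugate_iff]
  constructor
  · exact one_lt_phi
  · have h := phi_sq
    have h0 : phi ≠ 0 := ne_of_gt phi_pos
    field_simp
    nlinarith [phi_sq]

/-- `wa k = ⌊k φ⌋`. -/
noncomputable def wa (k : ℕ) : ℕ := (⌊(k : ℝ) * phi⌋).toNat

/-- `wb k = ⌊k φ²⌋ = wa k + k`. -/
noncomputable def wb (k : ℕ) : ℕ := wa k + k

lemma wa_cast (k : ℕ) : ((wa k : ℕ) : ℤ) = ⌊(k : ℝ) * phi⌋ := by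
  rw [wa, Int.toNat_of_nonneg]
  exact Int.floor_nonneg.2 (mul_nonneg (Nat.cast_nonneg k) (le_of_lt phi_pos))

lemma wa_le (k : ℕ) : (wa k : ℝ) ≤ k * phi := by
  have := Int.floor_le ((k : ℝ) * phi)
  rw [← wa_cast] at this; exact_mod_cast this

lemma lt_wa_add_one (k : ℕ) : (k : ℝ) * phi < wa k + 1 := by
  have := Int.lt_floor_add_one ((k : ℝ) * phi)
  rw [← wa_cast] at this; exact_mod_cast this

lemma wa_zero : wa 0 = 0 := by
  have h1 := wa_le 0
  simp at h1; omega

lemma ge_k (k : ℕ) : k ≤ wa k := by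
  have h := lt_wa_add_one k
  have : (k:ℝ) * 1 ≤ (k:ℝ) * phi := by
    apply mul_le_mul_of_nonneg_left (le_of_lt one_lt_phi) (Nat.cast_nonneg k)
  have : (k : ℝ) < wa k + 1 := by linarith [this, h]
  exact_mod_cast Nat.lt_add_one_iff.1 (by exact_mod_cast this)

lemma wa_strictMono : StrictMono wa := by
  intro k j hkj
  have h1 : (k:ℝ) * phi + phi ≤ (j:ℝ) * phi := by
    have : (k:ℝ) + 1 ≤ j := by exact_mod_cast hkj
    nlinarith [phi_pos]
  have h2 : (j:ℝ) * phi - 1 < wa j := by linarith [lt_wa_add_one j]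
  have h3 : (wa k : ℝ) < wa j := by
    have := wa_le k
    linarith [one_lt_phi]
  exact_mod_cast h3

lemma wa_inj {k j : ℕ} (h : wa k = wa j) : k = j := wa_strictMono.injective h

lemma wb_cast (k : ℕ) : ((wb k : ℕ) : ℤ) = ⌊(k : ℝ) * phi^2⌋ := by
  have : (k : ℝ) * phi^2 = (k:ℝ) * phi + (k : ℤ) := by rw [phi_sq]; push_cast; ring
  rw [this, Int.floor_add_intCast, wb, ← wa_cast]; push_cast; ring

/-- Disjointness part of Rayleigh's theorem. -/
lemma wa_ne_wb {k j : ℕ} (hk : 1 ≤ k) (hj : 1 ≤ j) : wa k ≠ wb j := by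
  intro h
  have hsym := Irrational.beattySeq_symmDiff_beattySeq_pos phi_conj (phi_eq ▸ Real.goldenRatio_irrational)
  set n : ℤ := (wa k : ℤ) with hn
  have hA : n ∈ {x | ∃ l > 0, beattySeq phi l = x} := by
    refine ⟨(k:ℤ), by exact_mod_cast hk, ?_⟩
    rw [beattySeq]; push_cast
    exact (wa_cast k).symm
  have hB : n ∈ {x | ∃ l > 0, beattySeq (phi^2) l = x} := by
    refine ⟨(j:ℤ), by exact_mod_cast hj, ?_⟩
    rw [beattySeq]; push_cast
    rw [← wb_cast, hn, h]
  have hpos : n ∈ {n : ℤ | 0 < n} := by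
    have := ge_k k
    simp only [Set.mem_setOf_eq, hn]
    exact_mod_cast lt_of_lt_of_le hk this
  rw [← hsym] at hpos
  rw [Set.mem_symmDiff] at hpos
  tauto

/-- Covering part of Rayleigh's theorem. -/
lemma wa_or_wb_cover (n : ℕ) : ∃ k, wa k = n ∨ wb k = n := by
  rcases Nat.eq_zero_or_pos n with h | h
  · exact ⟨0, Or.inl (by rw [h, wa_zero])⟩
  · have hsym := Irrational.beattySeq_symmDiff_beattySeq_pos phi_conj (phi_eq ▸ Real.goldenRatio_irrational)
    have hpos : (n:ℤ) ∈ {m : ℤ | 0 < m} := by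
      simp only [Set.mem_setOf_eq]; exact_mod_cast h
    rw [← hsym, Set.mem_symmDiff] at hpos
    have : (∃ l : ℤ, l > 0 ∧ beattySeq phi l = n) ∨ (∃ l : ℤ, l > 0 ∧ beattySeq (phi^2) l = n) := by
      rcases hpos with ⟨⟨l, hl, hln⟩, -⟩ | ⟨⟨l, hl, hln⟩, -⟩
      · exact Or.inl ⟨l, hl, hln⟩
      · exact Or.inr ⟨l, hl, hln⟩
    rcases this with ⟨l, hl, hln⟩ | ⟨l, hl, hln⟩
    · refine ⟨l.toNat, Or.inl ?_⟩
      have : ((wa l.toNat : ℕ) : ℤ) = (n : ℤ) := by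
        rw [wa_cast, ← hln, beattySeq]
        congr 2
        exact_mod_cast Int.toNat_of_nonneg (le_of_lt hl)
      exact_mod_cast this
    · refine ⟨l.toNat, Or.inr ?_⟩
      have : ((wb l.toNat : ℕ) : ℤ) = (n : ℤ) := by
        rw [wb_cast, ← hln, beattySeq]
        congr 2
        exact_mod_cast Int.toNat_of_nonneg (le_of_lt hl)
      exact_mod_cast this

lemma wa_eq_wb {k j : ℕ} (h : wa k = wb j) : k = 0 ∧ j = 0 := by
  rcases Nat.eq_zero_or_pos j with hj | hj
  · subst hj
    rw [wb, add_zero] at h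
    have := wa_inj h; omega
  · rcases Nat.eq_zero_or_pos k with hk | hk
    · subst hk; rw [wa_zero] at h
      have := ge_k j; rw [wb] at h; omega
    · exact absurd h (wa_ne_wb hk hj)

theorem PPos_iff (move) (pos : ℕ × ℕ) : PPos move pos ↔
    ∀ pos', move pos pos' → pos'.1 + pos'.2 < pos.1 + pos.2 → ¬ PPos move pos' := by
  rw [PPos]

/-- Moves of ordinary Wythoff Nim. -/
def WMove (p q : ℕ × ℕ) : Prop :=
  (∃ t, 1 ≤ t ∧ q.1 + t = p.1 ∧ q.2 = p.2) ∨
  (∃ t, 1 ≤ t ∧ q.1 = p.1 ∧ q.2 + t = p.2) ∨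
  (∃ t, 1 ≤ t ∧ q.1 + t = p.1 ∧ q.2 + t = p.2)

/-- The candidate P-positions of Wythoff Nim. -/
def isWP (p : ℕ × ℕ) : Prop := ∃ k, p = (wa k, wb k) ∨ p = (wb k, wa k)

lemma WMove_lt {p q : ℕ × ℕ} (h : WMove p q) : q.1 + q.2 < p.1 + p.2 := by
  rcases h with ⟨t, ht, h1, h2⟩ | ⟨t, ht, h1, h2⟩ | ⟨t, ht, h1, h2⟩ <;> omega

lemma wa_facts (k j : ℕ) :
    (wa j < wa k ∧ j < k ∨ (wa j = wa k ∧ j = k) ∨ (wa k < wa j ∧ k < j)) ∧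
    (k = 0 ∨ j = 0 ∨ wa k ≠ wb j) ∧ (j = 0 ∨ k = 0 ∨ wa j ≠ wb k) ∧
    k ≤ wa k ∧ j ≤ wa j ∧ wa 0 = 0 ∧ wb k = wa k + k ∧ wb j = wa j + j := by
  refine ⟨?_, ?_, ?_, ge_k k, ge_k j, wa_zero, rfl, rfl⟩
  · rcases lt_trichotomy j k with h | h | h
    · exact Or.inl ⟨wa_strictMono h, h⟩
    · exact Or.inr (Or.inl ⟨by rw [h], h⟩)
    · exact Or.inr (Or.inr ⟨wa_strictMono h, h⟩)
  · rcases Nat.eq_zero_or_pos k with h | h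
    · exact Or.inl h
    · rcases Nat.eq_zero_or_pos j with h' | h'
      · exact Or.inr (Or.inl h')
      · exact Or.inr (Or.inr (wa_ne_wb h h'))
  · rcases Nat.eq_zero_or_pos j with h | h
    · exact Or.inl h
    · rcases Nat.eq_zero_or_pos k with h' | h'
      · exact Or.inr (Or.inl h')
      · exact Or.inr (Or.inr (wa_ne_wb h h'))

/-- No Wythoff move leads from a candidate P-position to a candidate P-position. -/
lemma no_move_WP {p q : ℕ × ℕ} (hp : isWP p) (hmv : WMove p q) (hq : isWP q) : False := by
  obtain ⟨a, b⟩ := p; obtain ⟨c, d⟩ := q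
  obtain ⟨k, hk⟩ := hp
  obtain ⟨j, hj⟩ := hq
  have hf := wa_facts k j
  rw [Prod.mk.injEq, Prod.mk.injEq] at hk hj
  rcases hmv with ⟨t, ht, h1, h2⟩ | ⟨t, ht, h1, h2⟩ | ⟨t, ht, h1, h2⟩ <;>
    simp only at h1 h2 <;> rcases hk with ⟨hk1, hk2⟩ | ⟨hk1, hk2⟩ <;>
    rcases hj with ⟨hj1, hj2⟩ | ⟨hj1, hj2⟩ <;> omega

lemma wa_lt_wa {k j : ℕ} (h : wa k < wa j) : k < j := by
  by_contra hc
  exact absurd (wa_strictMono.le_iff_le.2 (by omega : j ≤ k)) (by omega)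

lemma isWP_zero : isWP (0, 0) := by
  refine ⟨0, Or.inl ?_⟩
  have h : wb 0 = wa 0 + 0 := rfl
  rw [Prod.mk.injEq]
  rw [wa_zero] at h ⊢
  omega

/-- From any non-candidate there is a Wythoff move to a candidate, assuming `a ≤ b`. -/
lemma move_to_WP_le {a b : ℕ} (hab : a ≤ b) (hp : ¬ isWP (a, b)) :
    ∃ q, WMove (a, b) q ∧ isWP q := by
  set d := b - a with hd
  rcases lt_trichotomy a (wa d) with hlt | heq | hgt
  · -- a < wa d : use cover
    obtain ⟨k, hk | hk⟩ := wa_or_wb_cover a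
    · -- a = wa k, k < d, move second coordinate down to wb k
      have hkd : k < d := wa_lt_wa (by omega)
      have hwb : wb k < b := by have : wb k = wa k + k := rfl; omega
      refine ⟨(a, wb k), Or.inr (Or.inl ⟨b - wb k, by omega, rfl, by simp; omega⟩),
        ⟨k, Or.inl (by rw [hk])⟩⟩
    · -- a = wb k, move second coordinate down to wa k
      have hwab : wa k ≤ wb k := by have : wb k = wa k + k := rfl; omega
      have hne : wa k < b := by
        rcases Nat.lt_or_ge (wa k) b with h | h
        · exact h
        · exfalso
          have h1 : wa k = wb k := by omega
          have h0 : k = 0 := by have : wb k = wa k + k := rfl; omega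
          have ha : a = 0 := by
            subst h0; have : wb 0 = wa 0 + 0 := rfl; rw [wa_zero] at this; omega
          have hb : b = 0 := by omega
          exact hp (ha ▸ hb ▸ isWP_zero)
      exact ⟨(a, wa k), Or.inr (Or.inl ⟨b - wa k, by omega, rfl, by simp; omega⟩),
        ⟨k, Or.inr (by rw [hk])⟩⟩
  · -- a = wa d : (a,b) is a candidate, contradiction
    refine absurd ⟨d, Or.inl ?_⟩ hp
    rw [Prod.mk.injEq]
    have : wb d = wa d + d := rfl
    exact ⟨heq, by omega⟩
  · -- a > wa d : diagonal move to (wa d, wb d)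
    have hwbd : wb d = wa d + d := rfl
    refine ⟨(wa d, wb d), Or.inr (Or.inr ⟨a - wa d, by omega, by simp; omega, by simp; omega⟩),
      ⟨d, Or.inl rfl⟩⟩

lemma WMove_swap {a b c d : ℕ} (h : WMove (a, b) (c, d)) : WMove (b, a) (d, c) := by
  rcases h with ⟨t, ht, h1, h2⟩ | ⟨t, ht, h1, h2⟩ | ⟨t, ht, h1, h2⟩
  · exact Or.inr (Or.inl ⟨t, ht, h2, h1⟩)
  · exact Or.inl ⟨t, ht, h2, h1⟩
  · exact Or.inr (Or.inr ⟨t, ht, h2, h1⟩)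

lemma isWP_swap {a b : ℕ} (h : isWP (a, b)) : isWP (b, a) := by
  obtain ⟨k, hk | hk⟩ := h
  · exact ⟨k, Or.inr (by simp_all)⟩
  · exact ⟨k, Or.inl (by simp_all)⟩

lemma move_to_WP {p : ℕ × ℕ} (hp : ¬ isWP p) : ∃ q, WMove p q ∧ isWP q := by
  obtain ⟨a, b⟩ := p
  rcases le_total a b with hab | hab
  · exact move_to_WP_le hab hp
  · obtain ⟨⟨c, d⟩, hmv, hq⟩ := move_to_WP_le hab (fun h => hp (isWP_swap h))
    exact ⟨(d, c), WMove_swap hmv, isWP_swap hq⟩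

/-- Wythoff's theorem: the P-positions of Wythoff Nim are exactly the pairs
`(⌊kφ⌋, ⌊kφ²⌋)` and their mirror images. -/
theorem wythoff_aux : ∀ n (p : ℕ × ℕ), p.1 + p.2 = n → (PPos WMove p ↔ isWP p) := by
  intro n
  induction n using Nat.strong_induction_on with
  | _ n IH =>
    intro p hn
    constructor
    · intro hP
      by_contra hp
      obtain ⟨q, hmv, hq⟩ := move_to_WP hp
      have hlt := WMove_lt hmv
      exact ((PPos_iff _ _).1 hP q hmv hlt)
        ((IH _ (by omega) q rfl).2 hq)
    · intro hp
      rw [PPos_iff]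
      intro q hmv hlt hPq
      exact no_move_WP hp hmv ((IH _ (by omega) q rfl).1 hPq)

theorem wythoff (p : ℕ × ℕ) : PPos WMove p ↔ isWP p := wythoff_aux _ p rfl

section Arith

/-- Arithmetic construction lemma: from bounds in `(u,v)`-coordinates, a legal
`Q`-move can be constructed. All inequalities in "coefficient first" form. -/
lemma qstep_construct (p1 q1 p2 q2 A B s t : ℕ) (hD : q1*p2 < p1*q2)
    (h1 : q1*A ≤ p1*B) (h2 : p2*B ≤ q2*A)
    (hDs : (p1*q2 - q1*p2)*s ≤ q2*A - p2*B) (hDt : (p1*q2 - q1*p2)*t ≤ p1*B - q1*A) :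
    p1*s + p2*t ≤ A ∧ q1*s + q2*t ≤ B ∧
    q1*(A - (p1*s + p2*t)) ≤ p1*(B - (q1*s + q2*t)) ∧
    p2*(B - (q1*s + q2*t)) ≤ q2*(A - (p1*s + p2*t)) ∧
    q2*(A - (p1*s + p2*t)) - p2*(B - (q1*s + q2*t)) = (q2*A - p2*B) - (p1*q2 - q1*p2)*s ∧
    p1*(B - (q1*s + q2*t)) - q1*(A - (p1*s + p2*t)) = (p1*B - q1*A) - (p1*q2 - q1*p2)*t := by
  have hDle : q1*p2 ≤ p1*q2 := hD.le
  have hx : (0:ℤ) ≤ (q2:ℤ)*A - p2*B := by have := h2; zify at this; linarith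
  have hy : (0:ℤ) ≤ (p1:ℤ)*B - q1*A := by have := h1; zify at this; linarith
  have hDz : (0:ℤ) < (p1:ℤ)*q2 - q1*p2 := by have := hD; zify at this; linarith
  have hDsz : ((p1:ℤ)*q2 - q1*p2)*s ≤ (q2:ℤ)*A - p2*B := by
    have := hDs; zify [hDle, h2] at this; linarith
  have hDtz : ((p1:ℤ)*q2 - q1*p2)*t ≤ (p1:ℤ)*B - q1*A := by
    have := hDt; zify [hDle, h1] at this; linarith
  have hp1z : (0:ℤ) ≤ (p1:ℤ) := by positivity
  have hp2z : (0:ℤ) ≤ (p2:ℤ) := by positivity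
  have hq1z : (0:ℤ) ≤ (q1:ℤ) := by positivity
  have hq2z : (0:ℤ) ≤ (q2:ℤ) := by positivity
  have m1 := mul_le_mul_of_nonneg_left hDsz hp1z
  have m2 := mul_le_mul_of_nonneg_left hDtz hp2z
  have m3 := mul_le_mul_of_nonneg_left hDsz hq1z
  have m4 := mul_le_mul_of_nonneg_left hDtz hq2z
  have hle1 : p1*s + p2*t ≤ A := by
    have key : ((p1:ℤ)*q2 - q1*p2) * (p1*s + p2*t) ≤ ((p1:ℤ)*q2 - q1*p2) * A := by
      linarith only [m1, m2]
    have := le_of_mul_le_mul_left key hDz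
    exact_mod_cast this
  have hle2 : q1*s + q2*t ≤ B := by
    have key : ((p1:ℤ)*q2 - q1*p2) * (q1*s + q2*t) ≤ ((p1:ℤ)*q2 - q1*p2) * B := by
      linarith only [m3, m4]
    have := le_of_mul_le_mul_left key hDz
    exact_mod_cast this
  refine ⟨hle1, hle2, ?_, ?_, ?_, ?_⟩
  · zify [hle1, hle2]; linarith only [hDtz]
  · zify [hle1, hle2]; linarith only [hDsz]
  · have hg : p2*(B - (q1*s + q2*t)) ≤ q2*(A - (p1*s + p2*t)) := by
      zify [hle1, hle2]; linarith only [hDsz]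
    zify [hle1, hle2, hg, h2, hDle, hDs]
    ring
  · have hg : q1*(A - (p1*s + p2*t)) ≤ p1*(B - (q1*s + q2*t)) := by
      zify [hle1, hle2]; linarith only [hDtz]
    zify [hle1, hle2, hg, h1, hDle, hDt]
    ring

/-- Arithmetic analysis lemma: any legal `Q`-move comes from subtracting multiples
of `D` in `(u,v)`-coordinates. -/
lemma qstep_analyze (p1 q1 p2 q2 A B s t : ℕ) (hD : q1*p2 < p1*q2)
    (h1 : q1*A ≤ p1*B) (h2 : p2*B ≤ q2*A)
    (hle1 : p1*s + p2*t ≤ A) (hle2 : q1*s + q2*t ≤ B)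
    (h1' : q1*(A - (p1*s + p2*t)) ≤ p1*(B - (q1*s + q2*t)))
    (h2' : p2*(B - (q1*s + q2*t)) ≤ q2*(A - (p1*s + p2*t))) :
    (p1*q2 - q1*p2)*s ≤ q2*A - p2*B ∧ (p1*q2 - q1*p2)*t ≤ p1*B - q1*A ∧
    q2*(A - (p1*s + p2*t)) - p2*(B - (q1*s + q2*t)) = (q2*A - p2*B) - (p1*q2 - q1*p2)*s ∧
    p1*(B - (q1*s + q2*t)) - q1*(A - (p1*s + p2*t)) = (p1*B - q1*A) - (p1*q2 - q1*p2)*t := by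
  have hDle : q1*p2 ≤ p1*q2 := hD.le
  have h1z : (0:ℤ) ≤ (p1:ℤ)*(B - (q1*s + q2*t) : ℕ) - q1*(A - (p1*s + p2*t) : ℕ) := by
    have := h1'; zify at this; linarith
  have h2z : (0:ℤ) ≤ (q2:ℤ)*(A - (p1*s + p2*t) : ℕ) - p2*(B - (q1*s + q2*t) : ℕ) := by
    have := h2'; zify at this; linarith
  have cA : ((A - (p1*s + p2*t) : ℕ) : ℤ) = (A:ℤ) - (p1*s + p2*t) := by
    zify [hle1]
  have cB : ((B - (q1*s + q2*t) : ℕ) : ℤ) = (B:ℤ) - (q1*s + q2*t) := by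
    zify [hle2]
  rw [cA, cB] at h1z h2z
  have hDs : (p1*q2 - q1*p2)*s ≤ q2*A - p2*B := by
    zify [hDle, h2]; linarith only [h2z]
  have hDt : (p1*q2 - q1*p2)*t ≤ p1*B - q1*A := by
    zify [hDle, h1]; linarith only [h1z]
  refine ⟨hDs, hDt, ?_, ?_⟩
  · zify [hle1, hle2, h2', h2, hDle, hDs]; ring
  · zify [hle1, hle2, h1', h1, hDle, hDt]; ring

end Arith

section Transport

variable {p1 q1 p2 q2 : ℕ}

/-- Forward construction: from bounds in `(m,n)` coordinates, construct a `Q`-move. -/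
lemma forward_step (hp1 : 0 < p1) (hq2 : 0 < q2) (hD : q1*p2 < p1*q2)
    (A B s t : ℕ) (hBQ : inBQ p1 q1 p2 q2 (A, B)) (hst : (s, t) ∈ MRW)
    (hsm : s ≤ (q2*A - p2*B)/(p1*q2 - q1*p2)) (htn : t ≤ (p1*B - q1*A)/(p1*q2 - q1*p2)) :
    ∃ A' B', QMove p1 q1 p2 q2 MRW (A, B) (A', B') ∧ A' + B' < A + B ∧
      q2*A' - p2*B' = (q2*A - p2*B) - (p1*q2 - q1*p2)*s ∧
      p1*B' - q1*A' = (p1*B - q1*A) - (p1*q2 - q1*p2)*t := by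
  have hD0 : 0 < p1*q2 - q1*p2 := Nat.sub_pos_of_lt hD
  have h1 : q1*A ≤ p1*B := by
    have h := hBQ.1; simp only at h; rw [mul_comm q1 A, mul_comm p1 B]; exact h
  have h2 : p2*B ≤ q2*A := by
    have h := hBQ.2; simp only at h; rw [mul_comm p2 B, mul_comm q2 A]; exact h
  have hDs : (p1*q2 - q1*p2)*s ≤ q2*A - p2*B := by
    calc (p1*q2 - q1*p2)*s ≤ (p1*q2 - q1*p2) * ((q2*A - p2*B)/(p1*q2 - q1*p2)) :=
          Nat.mul_le_mul_left _ hsm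
      _ ≤ q2*A - p2*B := by rw [mul_comm]; exact Nat.div_mul_le_self _ _
  have hDt : (p1*q2 - q1*p2)*t ≤ p1*B - q1*A := by
    calc (p1*q2 - q1*p2)*t ≤ (p1*q2 - q1*p2) * ((p1*B - q1*A)/(p1*q2 - q1*p2)) :=
          Nat.mul_le_mul_left _ htn
      _ ≤ p1*B - q1*A := by rw [mul_comm]; exact Nat.div_mul_le_self _ _
  obtain ⟨hle1, hle2, hBQ1', hBQ2', heq1, heq2⟩ :=
    qstep_construct p1 q1 p2 q2 A B s t hD h1 h2 hDs hDt
  refine ⟨A - (p1*s + p2*t), B - (q1*s + q2*t),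
    ⟨s, t, hst, hle1, hle2, rfl, rfl, ?_, ?_⟩, ?_, heq1, heq2⟩
  · rw [mul_comm (A - (p1*s + p2*t)) q1, mul_comm (B - (q1*s + q2*t)) p1]; exact hBQ1'
  · rw [mul_comm (B - (q1*s + q2*t)) p2, mul_comm (A - (p1*s + p2*t)) q2]; exact hBQ2'
  · -- sum decreases
    have hpos : 1 ≤ p1*s + p2*t + (q1*s + q2*t) := by
      obtain ⟨r, hr, h | h | h⟩ := hst <;> rw [Prod.mk.injEq] at h <;>
        obtain ⟨rfl, rfl⟩ := h
      · have := Nat.mul_pos hq2 hr; omega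
      · have := Nat.mul_pos hp1 hr; omega
      · have := Nat.mul_pos hp1 hr; omega
    obtain ⟨S, hS⟩ : ∃ S, p1*s + p2*t = S := ⟨_, rfl⟩
    obtain ⟨T, hT⟩ : ∃ T, q1*s + q2*t = T := ⟨_, rfl⟩
    rw [hS, hT] at hpos ⊢
    rw [hS] at hle1
    rw [hT] at hle2
    omega

/-- The transport theorem: `(A,B)` is a P-position of rational Wythoff Nim iff its
`(m,n)`-coordinates form a P-position of ordinary Wythoff Nim. -/
theorem transport (hp1 : 0 < p1) (hq2 : 0 < q2) (hD : q1*p2 < p1*q2) :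
    ∀ N A B, A + B = N → inBQ p1 q1 p2 q2 (A, B) →
    (PPos (QMove p1 q1 p2 q2 MRW) (A, B) ↔
      PPos WMove ((q2*A - p2*B)/(p1*q2 - q1*p2), (p1*B - q1*A)/(p1*q2 - q1*p2))) := by
  intro N
  induction N using Nat.strong_induction_on with
  | _ N IH =>
  intro A B hN hBQ
  have hD0 : 0 < p1*q2 - q1*p2 := Nat.sub_pos_of_lt hD
  have h1 : q1*A ≤ p1*B := by
    have h := hBQ.1; simp only at h; rw [mul_comm q1 A, mul_comm p1 B]; exact h
  have h2 : p2*B ≤ q2*A := by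
    have h := hBQ.2; simp only at h; rw [mul_comm p2 B, mul_comm q2 A]; exact h
  constructor
  · -- P-position of RW implies P-position of Wythoff
    intro hP
    rw [PPos_iff]
    obtain ⟨m, hm⟩ : ∃ m, (q2*A - p2*B)/(p1*q2 - q1*p2) = m := ⟨_, rfl⟩
    obtain ⟨n0, hn0⟩ : ∃ n0, (p1*B - q1*A)/(p1*q2 - q1*p2) = n0 := ⟨_, rfl⟩
    rw [hm, hn0]
    rintro ⟨m', n'⟩ hmv hlt hPq
    have hstep : ∃ s t : ℕ, (s, t) ∈ MRW ∧
        s ≤ m ∧ t ≤ n0 ∧ m' = m - s ∧ n' = n0 - t := by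
      rcases hmv with ⟨r, hr, hm1, hm2⟩ | ⟨r, hr, hm1, hm2⟩ | ⟨r, hr, hm1, hm2⟩ <;>
        simp only at hm1 hm2
      · exact ⟨r, 0, ⟨r, hr, Or.inr (Or.inl rfl)⟩, by omega, by omega, by omega, by omega⟩
      · exact ⟨0, r, ⟨r, hr, Or.inl rfl⟩, by omega, by omega, by omega, by omega⟩
      · exact ⟨r, r, ⟨r, hr, Or.inr (Or.inr rfl)⟩, by omega, by omega, by omega, by omega⟩
    obtain ⟨s, t, hst, hsm, htn, hm', hn'⟩ := hstep
    have hsmE : s ≤ (q2*A - p2*B)/(p1*q2 - q1*p2) := by rw [hm]; exact hsm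
    have htnE : t ≤ (p1*B - q1*A)/(p1*q2 - q1*p2) := by rw [hn0]; exact htn
    obtain ⟨A', B', hqmv, hsum, hu', hv'⟩ :=
      forward_step hp1 hq2 hD A B s t hBQ hst hsmE htnE
    have hBQ' : inBQ p1 q1 p2 q2 (A', B') := by
      obtain ⟨s0, t0, -, -, -, -, -, h⟩ := hqmv
      exact h
    have hiff := IH (A' + B') (by omega) A' B' rfl hBQ'
    have hDs : (p1*q2 - q1*p2)*s ≤ q2*A - p2*B := by
      calc (p1*q2 - q1*p2)*s ≤ (p1*q2 - q1*p2) * ((q2*A - p2*B)/(p1*q2 - q1*p2)) :=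
            Nat.mul_le_mul_left _ hsmE
        _ ≤ q2*A - p2*B := by rw [mul_comm]; exact Nat.div_mul_le_self _ _
    have hDt : (p1*q2 - q1*p2)*t ≤ p1*B - q1*A := by
      calc (p1*q2 - q1*p2)*t ≤ (p1*q2 - q1*p2) * ((p1*B - q1*A)/(p1*q2 - q1*p2)) :=
            Nat.mul_le_mul_left _ htnE
        _ ≤ p1*B - q1*A := by rw [mul_comm]; exact Nat.div_mul_le_self _ _
    have hm'' : (q2*A' - p2*B')/(p1*q2 - q1*p2) = m' := by
      rw [hu', Nat.sub_mul_div_of_le _ _ _ hDs, hm, hm']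
    have hn'' : (p1*B' - q1*A')/(p1*q2 - q1*p2) = n' := by
      rw [hv', Nat.sub_mul_div_of_le _ _ _ hDt, hn0, hn']
    have hPq' : PPos (QMove p1 q1 p2 q2 MRW) (A', B') := by
      rw [hiff, hm'', hn'']
      exact hPq
    exact (PPos_iff _ _).1 hP (A', B') hqmv (by omega) hPq'
  · -- P-position of Wythoff implies P-position of RW
    intro hW
    rw [PPos_iff]
    rintro ⟨A', B'⟩ hqmv hlt hPq
    obtain ⟨s, t, hst, hle1, hle2, hA', hB', hBQ'⟩ := hqmv
    simp only at hA' hB' hle1 hle2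
    have h1' : q1*A' ≤ p1*B' := by
      have h := hBQ'.1; simp only at h; rw [mul_comm q1 A', mul_comm p1 B']; exact h
    have h2' : p2*B' ≤ q2*A' := by
      have h := hBQ'.2; simp only at h; rw [mul_comm p2 B', mul_comm q2 A']; exact h
    rw [hA', hB'] at h1' h2'
    obtain ⟨hDs, hDt, heq1, heq2⟩ :=
      qstep_analyze p1 q1 p2 q2 A B s t hD h1 h2 hle1 hle2 h1' h2'
    have hsm : s ≤ (q2*A - p2*B)/(p1*q2 - q1*p2) :=
      (Nat.le_div_iff_mul_le hD0).2 (by rw [mul_comm]; exact hDs)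
    have htn : t ≤ (p1*B - q1*A)/(p1*q2 - q1*p2) :=
      (Nat.le_div_iff_mul_le hD0).2 (by rw [mul_comm]; exact hDt)
    have hm' : (q2*A' - p2*B')/(p1*q2 - q1*p2)
        = (q2*A - p2*B)/(p1*q2 - q1*p2) - s := by
      rw [hA', hB', heq1, Nat.sub_mul_div_of_le _ _ _ hDs]
    have hn' : (p1*B' - q1*A')/(p1*q2 - q1*p2)
        = (p1*B - q1*A)/(p1*q2 - q1*p2) - t := by
      rw [hA', hB', heq2, Nat.sub_mul_div_of_le _ _ _ hDt]
    obtain ⟨m, hm⟩ : ∃ m, (q2*A - p2*B)/(p1*q2 - q1*p2) = m := ⟨_, rfl⟩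
    obtain ⟨n0, hn0⟩ : ∃ n0, (p1*B - q1*A)/(p1*q2 - q1*p2) = n0 := ⟨_, rfl⟩
    rw [hm] at hsm hm'
    rw [hn0] at htn hn'
    rw [hm, hn0] at hW
    have hwmv : WMove (m, n0)
        ((q2*A' - p2*B')/(p1*q2 - q1*p2), (p1*B' - q1*A')/(p1*q2 - q1*p2)) := by
      rw [hm', hn']
      obtain ⟨r, hr, h | h | h⟩ := hst <;> rw [Prod.mk.injEq] at h <;>
        obtain ⟨h3, h4⟩ := h
      · exact Or.inr (Or.inl ⟨r, hr, by simp only; omega, by simp only; omega⟩)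
      · exact Or.inl ⟨r, hr, by simp only; omega, by simp only; omega⟩
      · exact Or.inr (Or.inr ⟨r, hr, by simp only; omega, by simp only; omega⟩)
    have hwlt := WMove_lt hwmv
    have hiff := IH (A' + B') (by omega) A' B' rfl hBQ'
    exact (PPos_iff _ _).1 hW _ hwmv hwlt ((hiff).1 hPq)

end Transport

set_option maxHeartbeats 1000000

theorem stmt_13 (p1 q1 p2 q2 : ℕ) (hp1 : 0 < p1) (hq2 : 0 < q2)
    (hD : q1 * p2 < p1 * q2) (ε : ℝ) (hε : 0 < ε) :
    ∃ N : ℕ, ∀ A B : ℕ, inBQ p1 q1 p2 q2 (A, B) →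
      PPos (QMove p1 q1 p2 q2 MRW) (A, B) → N ≤ A →
      (B : ℝ) / (A : ℝ) < ((q1 : ℝ) + (q2 : ℝ)) / ((p1 : ℝ) + (p2 : ℝ)) →
      |(B : ℝ) / (A : ℝ) -
          ((q1 : ℝ) + phi * ((q1 : ℝ) + (q2 : ℝ))) /
            ((p1 : ℝ) + phi * ((p1 : ℝ) + (p2 : ℝ)))| < ε := by
  have hD0 : 0 < p1*q2 - q1*p2 := Nat.sub_pos_of_lt hD
  set Dn : ℕ := p1*q2 - q1*p2 with hDn
  have hd0 : (0:ℝ) < (Dn:ℝ) := by exact_mod_cast hD0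
  have hp1R : (1:ℝ) ≤ (p1:ℝ) := by exact_mod_cast hp1
  obtain ⟨N1, hN1⟩ := exists_nat_gt (4*(Dn:ℝ)/(ε*p1))
  refine ⟨N1 + 1, ?_⟩
  intro A B hBQ hP hNA hrat
  have h1 : q1*A ≤ p1*B := by
    have h := hBQ.1; simp only at h; rw [mul_comm q1 A, mul_comm p1 B]; exact h
  have h2 : p2*B ≤ q2*A := by
    have h := hBQ.2; simp only at h; rw [mul_comm p2 B, mul_comm q2 A]; exact h
  -- transport to Wythoff Nim and apply Wythoff's theorem
  have hw : PPos WMove ((q2*A - p2*B)/Dn, (p1*B - q1*A)/Dn) :=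
    (transport hp1 hq2 hD (A+B) A B rfl hBQ).1 hP
  have hWP : isWP ((q2*A - p2*B)/Dn, (p1*B - q1*A)/Dn) := (wythoff _).1 hw
  set u : ℕ := q2*A - p2*B with hu
  set v : ℕ := p1*B - q1*A with hv
  -- positivity of A
  have hA1 : 1 ≤ A := le_trans (by omega) hNA
  have ha0 : (0:ℝ) < (A:ℝ) := by exact_mod_cast hA1
  have hpp : (0:ℝ) < (p1:ℝ) + (p2:ℝ) := by
    have a1 : (0:ℝ) < (p1:ℝ) := by exact_mod_cast hp1
    have a2 : (0:ℝ) ≤ (p2:ℝ) := by positivity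
    linarith only [a1, a2]
  -- the ratio hypothesis gives v < u, hence n ≤ m
  have hBA : B*(p1+p2) < (q1+q2)*A := by
    have := (div_lt_div_iff₀ ha0 hpp).1 hrat
    exact_mod_cast this
  have huv : v < u := by
    rw [hu, hv]
    zify [h1, h2]
    zify at hBA
    linarith only [hBA]
  have hnm : v/Dn ≤ u/Dn := Nat.div_le_div_right huv.le
  -- the lower decomposition
  obtain ⟨k, hm, hn⟩ : ∃ k, u/Dn = wb k ∧ v/Dn = wa k := by
    obtain ⟨k, h | h⟩ := hWP <;> rw [Prod.mk.injEq] at h <;> obtain ⟨hm0, hn0⟩ := h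
    · have hwbk : wb k = wa k + k := rfl
      have hk0 : k = 0 := by omega
      subst hk0
      have hz : wa 0 = 0 := wa_zero
      exact ⟨0, by omega, by omega⟩
    · exact ⟨k, hm0, hn0⟩
  -- real quantities
  set x : ℝ := (u:ℝ) with hxdef
  set y : ℝ := (v:ℝ) with hydef
  set d : ℝ := (Dn:ℝ) with hddef
  set a : ℝ := (A:ℝ) with hadef
  set b : ℝ := (B:ℝ) with hbdef
  set w' : ℝ := ((wa k : ℕ):ℝ) with hwdef
  set K : ℝ := ((k:ℕ):ℝ) with hKdef
  set ρ : ℝ := ((u % Dn : ℕ):ℝ) with hρdef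
  set σ : ℝ := ((v % Dn : ℕ):ℝ) with hσdef
  -- cast identities
  have cx : x = q2*a - p2*b := by
    rw [hxdef, hu, Nat.cast_sub h2]; push_cast; ring
  have cy : y = p1*b - q1*a := by
    rw [hydef, hv, Nat.cast_sub h1]; push_cast; ring
  have cd : d = p1*q2 - q1*p2 := by
    rw [hddef, hDn, Nat.cast_sub hD.le]; push_cast; ring
  have ha : d*a = p1*x + p2*y := by rw [cx, cy, cd]; ring
  have hb : d*b = q1*x + q2*y := by rw [cx, cy, cd]; ring
  -- decomposition of x and y
  have hdmu : Dn * wb k + u % Dn = u := by rw [← hm]; exact Nat.div_add_mod u Dn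
  have hdmv : Dn * wa k + v % Dn = v := by rw [← hn]; exact Nat.div_add_mod v Dn
  have hwbk : ((wb k : ℕ):ℝ) = w' + K := by rw [hwdef, hKdef]; exact_mod_cast rfl
  have hxdec : x = d*(w' + K) + ρ := by
    rw [← hwbk]
    have : ((Dn * wb k + u % Dn : ℕ):ℝ) = (u:ℝ) := by exact_mod_cast hdmu
    push_cast at this
    rw [hxdef]; linarith only [this]
  have hydec : y = d*w' + σ := by
    have : ((Dn * wa k + v % Dn : ℕ):ℝ) = (v:ℝ) := by exact_mod_cast hdmv
    push_cast at this
    rw [hydef]; linarith only [this]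
  have hρlt : ρ < d := by
    rw [hρdef, hddef]; exact_mod_cast Nat.mod_lt _ hD0
  have hσlt : σ < d := by
    rw [hσdef, hddef]; exact_mod_cast Nat.mod_lt _ hD0
  have hρ0 : 0 ≤ ρ := by rw [hρdef]; positivity
  have hσ0 : 0 ≤ σ := by rw [hσdef]; positivity
  have hK0 : 0 ≤ K := by rw [hKdef]; positivity
  -- Beatty bounds
  have hw1 : w' ≤ K*phi := by
    have := wa_le k; rw [hwdef, hKdef]; exact_mod_cast this
  have hw2 : K*phi < w' + 1 := by
    have := lt_wa_add_one k; rw [hwdef, hKdef]; exact_mod_cast this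
  -- bound |φ y - x| < 2 d
  have hphi1 : (0:ℝ) ≤ phi - 1 := by linarith only [one_lt_phi]
  have hsq := phi_sq
  have t1 : (phi - 1)*w' ≤ (phi - 1)*(K*phi) := mul_le_mul_of_nonneg_left hw1 hphi1
  have t2 : (phi - 1)*(K*phi - 1) ≤ (phi - 1)*w' :=
    mul_le_mul_of_nonneg_left (by linarith only [hw2]) hphi1
  have t1' : d*((phi - 1)*w') ≤ d*((phi - 1)*(K*phi)) :=
    mul_le_mul_of_nonneg_left t1 hd0.le
  have t2' : d*((phi - 1)*(K*phi - 1)) ≤ d*((phi - 1)*w') :=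
    mul_le_mul_of_nonneg_left t2 hd0.le
  have e1' : d*((phi - 1)*(K*phi)) = d*K := by linear_combination d*K*hsq
  have e2' : d*((phi - 1)*(K*phi - 1)) = d*K - d*phi + d := by linear_combination d*K*hsq
  have t3 : phi*σ < 2*d := by
    calc phi*σ ≤ 2*σ := mul_le_mul_of_nonneg_right phi_lt_two.le hσ0
      _ < 2*d := by linarith only [hσlt]
  have t4 : 0 ≤ phi*σ := mul_nonneg phi_pos.le hσ0
  have t5 : d*phi < d*2 := mul_lt_mul_of_pos_left phi_lt_two hd0
  have hEub : phi*y - x < 2*d := by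
    have hyexp : phi*y = phi*(d*w') + phi*σ := by rw [hydec]; ring
    linarith only [t1', e1', t3, hρ0, hxdec, hyexp]
  have hElb : -(2*d) < phi*y - x := by
    have hyexp : phi*y = phi*(d*w') + phi*σ := by rw [hydec]; ring
    linarith only [t2', e2', t4, hρlt, t5, hxdec, hyexp]
  have hE : |phi*y - x| < 2*d := abs_lt.2 ⟨hElb, hEub⟩
  -- the exact identity for the ratio
  set P : ℝ := (p1:ℝ) + phi*((p1:ℝ)+(p2:ℝ)) with hPdef
  have hPpos : 0 < P := by
    have a1 : 0 ≤ phi*((p1:ℝ)+(p2:ℝ)) := mul_nonneg phi_pos.le (by positivity)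
    rw [hPdef]; linarith only [a1, hp1R]
  have hPge : (p1:ℝ) ≤ P := by
    have a1 : 0 ≤ phi*((p1:ℝ)+(p2:ℝ)) := mul_nonneg phi_pos.le (by positivity)
    rw [hPdef]; linarith only [a1]
  have key : d*(b*P) - ((q1:ℝ) + phi*((q1:ℝ)+(q2:ℝ)))*(d*a) = d*(phi*(phi*y - x)) := by
    rw [hPdef]
    linear_combination ((p1:ℝ) + phi*((p1:ℝ)+(p2:ℝ)))*hb
      - ((q1:ℝ) + phi*((q1:ℝ)+(q2:ℝ)))*ha + (phi*x - (1+phi)*y)*cd - d*y*hsq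
  have hnum : b*P - a*((q1:ℝ) + phi*((q1:ℝ)+(q2:ℝ))) = phi*(phi*y - x) := by
    apply mul_left_cancel₀ (ne_of_gt hd0)
    linear_combination key
  have hfinal : b/a - ((q1:ℝ) + phi*((q1:ℝ)+(q2:ℝ)))/P = phi*(phi*y - x)/(a*P) := by
    rw [div_sub_div _ _ (ne_of_gt ha0) (ne_of_gt hPpos), hnum]
  -- conclude
  have haP : 0 < a*P := mul_pos ha0 hPpos
  rw [show ((q1:ℝ) + phi*((q1:ℝ)+(q2:ℝ))) / ((p1:ℝ) + phi*((p1:ℝ)+(p2:ℝ)))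
      = ((q1:ℝ) + phi*((q1:ℝ)+(q2:ℝ)))/P from by rw [hPdef]]
  rw [hfinal, abs_div, abs_mul, abs_of_pos phi_pos, abs_of_pos haP]
  rw [div_lt_iff₀ haP]
  have s1 : phi*|phi*y - x| < 4*d := by
    have u1 : phi*|phi*y - x| ≤ 2*|phi*y - x| :=
      mul_le_mul_of_nonneg_right phi_lt_two.le (abs_nonneg _)
    linarith only [hE, u1]
  have hεp1 : (0:ℝ) < ε*(p1:ℝ) := by positivity
  have haN : (N1:ℝ) < a := by
    rw [hadef]
    have a1 : (N1:ℝ) + 1 ≤ (A:ℝ) := by exact_mod_cast hNA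
    linarith only [a1]
  have s2 : 4*d < ε*((p1:ℝ)*a) := by
    have h4 : 4*(Dn:ℝ)/(ε*p1) < a := lt_trans hN1 haN
    have a1 := (div_lt_iff₀ hεp1).1 h4
    rw [hddef]; linarith only [a1]
  have s3 : ε*((p1:ℝ)*a) ≤ ε*(a*P) := by
    apply mul_le_mul_of_nonneg_left _ hε.le
    have h := mul_nonneg ha0.le (sub_nonneg.2 hPge)
    linarith only [h]
  linarith only [s1, s2, s3]
end
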